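/- arXiv:1002.0571 — 3 statements merged into one kernel-verified Lean document; each statement's English description precedes it below -/
import Mathlib

section
/- If F : [0,∞) → ℝ satisfies the integral equation F(y) = ∫₀^{y/v} (1−Ψ(l)) dl + (1/v)∫₀^y ψ((y−z)/v) ∫₀^z h(u) F(z−u) du dz for all y ≥ 0, then its Laplace transform is F̂(s) = (1/(v s²)) · (1−ψ̂(sv))/(1−ψ̂(sv)·ĥ(s)). -/
open MeasureTheory Real
open scoped Convolution

lemma conv_repr (φ χ : ℝ → ℝ) (hφ : ∀ t ≤ (0:ℝ), φ t = 0) (hχ : ∀ z ≤ (0:ℝ), χ z = 0)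
    {y : ℝ} (hy : 0 ≤ y) :
    (φ ⋆[ContinuousLinearMap.mul ℝ ℝ] χ) y = ∫ z in (0:ℝ)..y, φ (y - z) * χ z := by
  rw [MeasureTheory.convolution_def]
  have h1 : ∀ t : ℝ, (ContinuousLinearMap.mul ℝ ℝ) (φ t) (χ (y - t))
      = (Set.Ioo (0:ℝ) y).indicator (fun t => φ t * χ (y - t)) t := by
    intro t
    simp only [ContinuousLinearMap.mul_apply']
    by_cases ht : t ∈ Set.Ioo (0:ℝ) y
    · rw [Set.indicator_of_mem ht]
    · rw [Set.indicator_of_notMem ht]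
      rcases le_or_gt t 0 with h0 | h0
      · rw [hφ t h0, zero_mul]
      · have : y ≤ t := by
          by_contra hc
          exact ht ⟨h0, lt_of_not_ge hc⟩
        rw [hχ (y - t) (by linarith), mul_zero]
  simp_rw [h1]
  rw [MeasureTheory.integral_indicator measurableSet_Ioo,
    ← MeasureTheory.integral_Ioc_eq_integral_Ioo, ← intervalIntegral.integral_of_le hy]
  have h2 := intervalIntegral.integral_comp_sub_left (a := (0:ℝ)) (b := y)
    (fun z => φ (y - z) * χ z) y
  simp only [sub_self, sub_zero, sub_sub_cancel] at h2
  exact h2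

lemma conv_vanish (φ χ : ℝ → ℝ) (hφ : ∀ t ≤ (0:ℝ), φ t = 0) (hχ : ∀ z ≤ (0:ℝ), χ z = 0)
    {y : ℝ} (hy : y ≤ 0) :
    (φ ⋆[ContinuousLinearMap.mul ℝ ℝ] χ) y = 0 := by
  rw [MeasureTheory.convolution_def]
  have h1 : ∀ t : ℝ, (ContinuousLinearMap.mul ℝ ℝ) (φ t) (χ (y - t)) = 0 := by
    intro t
    simp only [ContinuousLinearMap.mul_apply']
    rcases le_or_gt t 0 with h0 | h0
    · rw [hφ t h0, zero_mul]
    · rw [hχ (y - t) (by linarith), mul_zero]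
  simp_rw [h1, integral_zero]

lemma setInt_eq_int (c : ℝ → ℝ) (hc : ∀ y ≤ (0:ℝ), c y = 0) :
    ∫ y in Set.Ioi (0:ℝ), c y = ∫ y, c y := by
  rw [← MeasureTheory.integral_indicator measurableSet_Ioi]
  congr 1
  funext y
  by_cases hy : y ∈ Set.Ioi (0:ℝ)
  · rw [Set.indicator_of_mem hy]
  · rw [Set.indicator_of_notMem hy, hc y (by simpa using hy)]

/-- If `F(y) = ∫₀^{y/v}(1−Ψ(l))dl + (1/v)∫₀^y ψ((y−z)/v) ∫₀^z h(u)F(z−u) du dz`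
then `F̂(s) = (1/(vs²))(1−ψ̂(sv))/(1−ψ̂(sv)ĥ(s))`. -/
theorem stmt_1 (F ψ h : ℝ → ℝ) (v : ℝ) (hv : 0 < v)
    (hψ_nonneg : ∀ t, 0 ≤ ψ t) (hψ_prob : ∫ t in Set.Ioi (0:ℝ), ψ t = 1)
    (hh_nonneg : ∀ u, 0 ≤ h u) (hh_prob : ∫ u in Set.Ioi (0:ℝ), h u = 1)
    (heq : ∀ y ≥ (0:ℝ),
      F y = (∫ l in (0:ℝ)..(y / v), (1 - ∫ u in (0:ℝ)..l, ψ u))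
        + (1 / v) * ∫ z in (0:ℝ)..y,
            ψ ((y - z) / v) * ∫ u in (0:ℝ)..z, h u * F (z - u))
    (s : ℝ) (hs : 0 < s)
    (hFi : IntegrableOn (fun y => Real.exp (-s * y) * F y) (Set.Ioi 0))
    (hψi : IntegrableOn (fun t => Real.exp (-(s * v) * t) * ψ t) (Set.Ioi 0))
    (hhi : IntegrableOn (fun u => Real.exp (-s * u) * h u) (Set.Ioi 0))
    (hne : (∫ t in Set.Ioi (0:ℝ), Real.exp (-(s * v) * t) * ψ t)
        * (∫ u in Set.Ioi (0:ℝ), Real.exp (-s * u) * h u) ≠ 1) :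
    ∫ y in Set.Ioi (0:ℝ), Real.exp (-s * y) * F y
      = (1 / (v * s ^ 2))
        * (1 - ∫ t in Set.Ioi (0:ℝ), Real.exp (-(s * v) * t) * ψ t)
        / (1 - (∫ t in Set.Ioi (0:ℝ), Real.exp (-(s * v) * t) * ψ t)
            * (∫ u in Set.Ioi (0:ℝ), Real.exp (-s * u) * h u)) := by
  classical
  have hv' : v ≠ 0 := ne_of_gt hv
  have hs' : s ≠ 0 := ne_of_gt hs
  set a := ∫ t in Set.Ioi (0:ℝ), Real.exp (-(s * v) * t) * ψ t with ha
  set b := ∫ u in Set.Ioi (0:ℝ), Real.exp (-s * u) * h u with hb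
  set A := ∫ y in Set.Ioi (0:ℝ), Real.exp (-s * y) * F y with hA
  set L := ContinuousLinearMap.mul ℝ ℝ with hL
  -- the indicator building blocks
  set f := (Set.Ioi (0:ℝ)).indicator (fun u => Real.exp (-s * u) * h u) with hf
  set g := (Set.Ioi (0:ℝ)).indicator (fun y => Real.exp (-s * y) * F y) with hg
  set p := (Set.Ioi (0:ℝ)).indicator
      (fun t => Real.exp (-(s * v) * (v⁻¹ * t)) * ψ (v⁻¹ * t)) with hp
  set Efun := (Set.Ioi (0:ℝ)).indicator (fun t => Real.exp (-s * t)) with hE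
  have hnm : ∀ z : ℝ, z ≤ 0 → z ∉ Set.Ioi (0:ℝ) := fun z hz => by simpa using hz
  have hfz : ∀ z ≤ (0:ℝ), f z = 0 := fun z hz => Set.indicator_of_notMem (hnm z hz) _
  have hgz : ∀ z ≤ (0:ℝ), g z = 0 := fun z hz => Set.indicator_of_notMem (hnm z hz) _
  have hpz : ∀ z ≤ (0:ℝ), p z = 0 := fun z hz => Set.indicator_of_notMem (hnm z hz) _
  have hEz : ∀ z ≤ (0:ℝ), Efun z = 0 := fun z hz => Set.indicator_of_notMem (hnm z hz) _
  -- integrability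
  have hfI : Integrable f := (integrable_indicator_iff measurableSet_Ioi).2 hhi
  have hgI : Integrable g := (integrable_indicator_iff measurableSet_Ioi).2 hFi
  have hpI : Integrable p := by
    refine (integrable_indicator_iff measurableSet_Ioi).2 ?_
    have := (integrableOn_Ioi_comp_mul_left_iff
      (fun t => Real.exp (-(s * v) * t) * ψ t) 0 (inv_pos.mpr hv)).2
    simp only [mul_zero] at this
    exact this hψi
  have hEI : Integrable Efun := by
    refine (integrable_indicator_iff measurableSet_Ioi).2 ?_
    exact exp_neg_integrableOn_Ioi 0 hs
  -- integrals
  have hfint : ∫ u, f u = b := by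
    rw [hf, MeasureTheory.integral_indicator measurableSet_Ioi]
  have hgint : ∫ y, g y = A := by
    rw [hg, MeasureTheory.integral_indicator measurableSet_Ioi]
  have hpint : ∫ t, p t = v * a := by
    rw [hp, MeasureTheory.integral_indicator measurableSet_Ioi]
    have := MeasureTheory.integral_comp_mul_left_Ioi
      (fun t => Real.exp (-(s * v) * t) * ψ t) 0 (inv_pos.mpr hv)
    simp only [mul_zero, inv_inv, smul_eq_mul] at this
    rw [this, ha]
  have hEint : ∫ t, Efun t = s⁻¹ := by
    rw [hE, MeasureTheory.integral_indicator measurableSet_Ioi]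
    have := MeasureTheory.integral_comp_mul_left_Ioi (fun t => Real.exp (-t)) 0 hs
    simp only [mul_zero, smul_eq_mul, integral_exp_neg_Ioi, neg_zero, Real.exp_zero,
      mul_one] at this
    simpa [neg_mul] using this
  -- the function w
  set w : ℝ → ℝ := fun t => Efun t - v⁻¹ * (Efun ⋆[L] p) t with hw
  have hconvEp : Integrable (Efun ⋆[L] p) := hEI.integrable_convolution L hpI
  have hwI : Integrable w := hEI.sub (hconvEp.const_mul v⁻¹)
  have hwz : ∀ z ≤ (0:ℝ), w z = 0 := by
    intro z hz
    show Efun z - v⁻¹ * (Efun ⋆[L] p) z = 0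
    rw [hEz z hz, conv_vanish _ _ hEz hpz hz, mul_zero, sub_zero]
  have hwint : ∫ t, w t = (1 - a) / s := by
    rw [hw, MeasureTheory.integral_sub hEI (hconvEp.const_mul v⁻¹),
      MeasureTheory.integral_const_mul, MeasureTheory.integral_convolution L hEI hpI,
      hEint, hpint]
    simp only [hL, ContinuousLinearMap.mul_apply']
    field_simp
  have hwval : ∀ t : ℝ, 0 < t →
      w t = Real.exp (-s * t) * (1 - ∫ u in (0:ℝ)..(t / v), ψ u) := by
    intro t ht
    have h1 : (Efun ⋆[L] p) t = ∫ z in (0:ℝ)..t, Efun (t - z) * p z :=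
      conv_repr _ _ hEz hpz ht.le
    have h2 : ∫ z in (0:ℝ)..t, Efun (t - z) * p z
        = Real.exp (-s * t) * ∫ z in (0:ℝ)..t, ψ (z / v) := by
      rw [intervalIntegral.integral_of_le ht.le, intervalIntegral.integral_of_le ht.le,
        MeasureTheory.integral_Ioc_eq_integral_Ioo, MeasureTheory.integral_Ioc_eq_integral_Ioo,
        ← MeasureTheory.integral_const_mul]
      refine MeasureTheory.setIntegral_congr_fun measurableSet_Ioo (fun z hz => ?_)
      have hz0 : (0:ℝ) < z := hz.1
      have hzt : z < t := hz.2
      rw [hE, hp, Set.indicator_of_mem (Set.mem_Ioi.mpr (by linarith : (0:ℝ) < t - z)),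
        Set.indicator_of_mem (Set.mem_Ioi.mpr hz0)]
      have e1 : -(s * v) * (v⁻¹ * z) = -s * z := by field_simp
      have e2 : v⁻¹ * z = z / v := by rw [inv_mul_eq_div]
      rw [e1, e2, ← mul_assoc, ← Real.exp_add]
      ring_nf
    have h3 : ∫ z in (0:ℝ)..t, ψ (z / v) = v * ∫ u in (0:ℝ)..(t / v), ψ u := by
      have := intervalIntegral.integral_comp_div (a := (0:ℝ)) (b := t) (c := v) ψ hv'
      simpa [zero_div, smul_eq_mul] using this
    show Efun t - v⁻¹ * (Efun ⋆[L] p) t = _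
    rw [h1, h2, h3, hE, Set.indicator_of_mem (Set.mem_Ioi.mpr ht)]
    field_simp
  -- the function q
  set K : ℝ → ℝ := fun z => ∫ u in (0:ℝ)..z, h u * F (z - u) with hK
  set q := (Set.Ioi (0:ℝ)).indicator (fun z => Real.exp (-s * z) * K z) with hq
  have hqz : ∀ z ≤ (0:ℝ), q z = 0 := fun z hz => Set.indicator_of_notMem (hnm z hz) _
  have hqeq : q = (g ⋆[L] f) := by
    funext z
    rcases le_or_gt z 0 with hz | hz
    · rw [hqz z hz, conv_vanish _ _ hgz hfz hz]
    · rw [hq, Set.indicator_of_mem (Set.mem_Ioi.mpr hz), conv_repr _ _ hgz hfz hz.le]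
      show Real.exp (-s * z) * K z = _
      rw [show K z = ∫ u in (0:ℝ)..z, h u * F (z - u) from rfl]
      rw [intervalIntegral.integral_of_le hz.le, intervalIntegral.integral_of_le hz.le,
        MeasureTheory.integral_Ioc_eq_integral_Ioo, MeasureTheory.integral_Ioc_eq_integral_Ioo,
        ← MeasureTheory.integral_const_mul]
      refine MeasureTheory.setIntegral_congr_fun measurableSet_Ioo (fun u hu => ?_)
      rw [hg, hf, Set.indicator_of_mem (Set.mem_Ioi.mpr (by linarith [hu.2] : (0:ℝ) < z - u)),
        Set.indicator_of_mem (Set.mem_Ioi.mpr hu.1)]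
      have e1 : Real.exp (-s * (z - u)) * Real.exp (-s * u) = Real.exp (-s * z) := by
        rw [← Real.exp_add]; ring_nf
      rw [← e1]
      ring
  have hqI : Integrable q := by rw [hqeq]; exact hgI.integrable_convolution L hfI
  have hqint : ∫ z, q z = A * b := by
    rw [hqeq, MeasureTheory.integral_convolution L hgI hfI, hgint, hfint]
    simp [hL, ContinuousLinearMap.mul_apply']
  -- main pointwise identity
  have hmain : ∀ y : ℝ, 0 < y → Real.exp (-s * y) * F y
      = v⁻¹ * (Efun ⋆[L] w) y + v⁻¹ * (p ⋆[L] q) y := by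
    intro y hy
    have hG : (Efun ⋆[L] w) y
        = Real.exp (-s * y) * (v * ∫ l in (0:ℝ)..(y / v), (1 - ∫ u in (0:ℝ)..l, ψ u)) := by
      rw [conv_repr _ _ hEz hwz hy.le]
      have h1 : ∫ t in (0:ℝ)..y, Efun (y - t) * w t
          = Real.exp (-s * y) * ∫ t in (0:ℝ)..y, (1 - ∫ u in (0:ℝ)..(t / v), ψ u) := by
        rw [intervalIntegral.integral_of_le hy.le, intervalIntegral.integral_of_le hy.le,
          MeasureTheory.integral_Ioc_eq_integral_Ioo, MeasureTheory.integral_Ioc_eq_integral_Ioo,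
          ← MeasureTheory.integral_const_mul]
        refine MeasureTheory.setIntegral_congr_fun measurableSet_Ioo (fun t ht => ?_)
        rw [hwval t ht.1, hE,
          Set.indicator_of_mem (Set.mem_Ioi.mpr (by linarith [ht.2] : (0:ℝ) < y - t)),
          ← mul_assoc, ← Real.exp_add]
        ring_nf
      have h2 : ∫ t in (0:ℝ)..y, (1 - ∫ u in (0:ℝ)..(t / v), ψ u)
          = v * ∫ l in (0:ℝ)..(y / v), (1 - ∫ u in (0:ℝ)..l, ψ u) := by
        have := intervalIntegral.integral_comp_div (a := (0:ℝ)) (b := y) (c := v)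
          (fun l => 1 - ∫ u in (0:ℝ)..l, ψ u) hv'
        simpa [zero_div, smul_eq_mul] using this
      rw [h1, h2]
    have hC : (p ⋆[L] q) y
        = Real.exp (-s * y) * ∫ z in (0:ℝ)..y, ψ ((y - z) / v) * K z := by
      rw [conv_repr _ _ hpz hqz hy.le]
      rw [intervalIntegral.integral_of_le hy.le, intervalIntegral.integral_of_le hy.le,
        MeasureTheory.integral_Ioc_eq_integral_Ioo, MeasureTheory.integral_Ioc_eq_integral_Ioo,
        ← MeasureTheory.integral_const_mul]
      refine MeasureTheory.setIntegral_congr_fun measurableSet_Ioo (fun z hz => ?_)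
      rw [hp, hq,
        Set.indicator_of_mem (Set.mem_Ioi.mpr (by linarith [hz.2] : (0:ℝ) < y - z)),
        Set.indicator_of_mem (Set.mem_Ioi.mpr hz.1)]
      have e1 : -(s * v) * (v⁻¹ * (y - z)) = -s * (y - z) := by field_simp
      have e2 : v⁻¹ * (y - z) = (y - z) / v := by rw [inv_mul_eq_div]
      rw [e1, e2, mul_mul_mul_comm, ← Real.exp_add]
      ring_nf
    rw [heq y hy.le, hG, hC]
    field_simp
    ring
  -- assemble
  have hconvEw : Integrable (Efun ⋆[L] w) := hEI.integrable_convolution L hwI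
  have hconvpq : Integrable (p ⋆[L] q) := hpI.integrable_convolution L hqI
  have hAval : A = v⁻¹ * (s⁻¹ * ((1 - a) / s)) + v⁻¹ * ((v * a) * (A * b)) := by
    conv_lhs => rw [hA]
    rw [MeasureTheory.setIntegral_congr_fun measurableSet_Ioi
      (fun y hy => hmain y (Set.mem_Ioi.mp hy))]
    rw [MeasureTheory.integral_add ((hconvEw.const_mul v⁻¹).integrableOn)
      ((hconvpq.const_mul v⁻¹).integrableOn)]
    rw [MeasureTheory.integral_const_mul, MeasureTheory.integral_const_mul]
    rw [setInt_eq_int _ (fun z hz => conv_vanish _ _ hEz hwz hz),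
      setInt_eq_int _ (fun z hz => conv_vanish _ _ hpz hqz hz)]
    rw [MeasureTheory.integral_convolution L hEI hwI,
      MeasureTheory.integral_convolution L hpI hqI, hEint, hwint, hpint, hqint]
    simp [hL, ContinuousLinearMap.mul_apply']
  have hab : 1 - a * b ≠ 0 := sub_ne_zero.mpr (Ne.symm hne)
  have hv2 : v⁻¹ * ((v * a) * (A * b)) = a * b * A := by
    field_simp
  have hs2 : v⁻¹ * (s⁻¹ * ((1 - a) / s)) = (1 - a) / (v * s ^ 2) := by
    rw [pow_two]
    field_simp
  rw [hv2, hs2] at hAval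
  rw [eq_div_iff hab]
  linear_combination hAval
end

section
/- For λ, γ, v > 0 with 4λ < γv, the Laplace transform of ρ ↦ (2γv/(λ+2γv))ρ + (λ²/(z₊−z₋))[(1−e^{−z₋ρ})/z₋² − (1−e^{−z₊ρ})/z₊²] (with z_± = λ + (γv/2)(1±√(1−4λ/(γv)))) evaluated at s > 0 equals (1/s²)·(2λγv + (2λ+γv)s + s²)/(λ(λ+2γv) + (2λ+γv)s + s²). -/
open MeasureTheory Real

lemma lap_exp {b : ℝ} (hb : 0 < b) :
    ∫ t in Set.Ioi (0:ℝ), Real.exp (-(b * t)) = 1 / b := by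
  simpa using Real.integral_rpow_mul_exp_neg_mul_Ioi one_pos hb

lemma lap_int_exp {b : ℝ} (hb : 0 < b) :
    IntegrableOn (fun t : ℝ => Real.exp (-(b * t))) (Set.Ioi 0) := by
  simpa [neg_mul] using exp_neg_integrableOn_Ioi 0 hb

lemma lap_id {b : ℝ} (hb : 0 < b) :
    ∫ t in Set.Ioi (0:ℝ), t * Real.exp (-(b * t)) = 1 / b ^ 2 := by
  have h := Real.integral_rpow_mul_exp_neg_mul_Ioi (a := 2) two_pos hb
  rw [show (2:ℝ) - 1 = 1 by norm_num] at h
  simp only [Real.rpow_one, Real.Gamma_two] at h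
  rw [h, mul_one]
  rw [Real.rpow_two, one_div_pow]

lemma lap_int_id {b : ℝ} (hb : 0 < b) :
    IntegrableOn (fun t : ℝ => t * Real.exp (-(b * t))) (Set.Ioi 0) := by
  have h := integrableOn_rpow_mul_exp_neg_mul_rpow (by norm_num : (-1:ℝ) < 1) one_pos hb
  simpa [Real.rpow_one, neg_mul] using h

/-- Laplace transform of the mean exit time for the favorable-drift case:
`T̂(s) = (1/s²)(2λγv + (2λ+γv)s + s²)/(λ(λ+2γv) + (2λ+γv)s + s²)`. -/
theorem stmt_14 (lam gam v zp zm : ℝ) (hlam : 0 < lam) (hgam : 0 < gam)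
    (hv : 0 < v) (h4 : 4 * lam < gam * v)
    (hzp : zp = lam + (gam * v / 2) * (1 + Real.sqrt (1 - 4 * lam / (gam * v))))
    (hzm : zm = lam + (gam * v / 2) * (1 - Real.sqrt (1 - 4 * lam / (gam * v))))
    (s : ℝ) (hs : 0 < s) :
    ∫ ρ in Set.Ioi (0:ℝ),
        Real.exp (-s * ρ) * ((2 * gam * v / (lam + 2 * gam * v)) * ρ
          + (lam ^ 2 / (zp - zm))
            * ((1 - Real.exp (-zm * ρ)) / zm ^ 2 - (1 - Real.exp (-zp * ρ)) / zp ^ 2))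
      = (1 / s ^ 2) * (2 * lam * gam * v + (2 * lam + gam * v) * s + s ^ 2)
          / (lam * (lam + 2 * gam * v) + (2 * lam + gam * v) * s + s ^ 2) := by
  have hgv : 0 < gam * v := mul_pos hgam hv
  set r : ℝ := Real.sqrt (1 - 4 * lam / (gam * v)) with hrdef
  have harg : 0 < 1 - 4 * lam / (gam * v) := by
    have : 4 * lam / (gam * v) < 1 := (div_lt_one hgv).mpr h4
    linarith
  have hr0 : 0 < r := Real.sqrt_pos.mpr harg
  have hr2 : r ^ 2 = 1 - 4 * lam / (gam * v) := Real.sq_sqrt harg.le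
  have hr2' : gam * v * r ^ 2 = gam * v - 4 * lam := by
    field_simp at hr2
    linarith
  have hrlt1 : r < 1 := by
    have hpos : 0 < 4 * lam / (gam * v) := by positivity
    nlinarith
  have hzm0 : 0 < zm := by rw [hzm]; nlinarith
  have hzp0 : 0 < zp := by rw [hzp]; nlinarith
  have hdiff : zm < zp := by rw [hzp, hzm]; nlinarith
  have hsum : zp + zm = 2 * lam + gam * v := by rw [hzp, hzm]; ring
  have hprod : zm * zp = lam * (lam + 2 * gam * v) := by
    rw [hzp, hzm]; linear_combination (-(gam * v) / 4) * hr2'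
  have hszm : 0 < s + zm := by linarith
  have hszp : 0 < s + zp := by linarith
  have hzpm : zp - zm ≠ 0 := sub_ne_zero.mpr hdiff.ne'
  have hl2 : (lam + 2 * gam * v) ≠ 0 := by positivity
  have hP : (s + zm) * (s + zp) = lam * (lam + 2 * gam * v) + (2 * lam + gam * v) * s + s ^ 2 := by
    linear_combination hprod + s * hsum
  have key : ∀ ρ : ℝ,
      Real.exp (-s * ρ) * ((2 * gam * v / (lam + 2 * gam * v)) * ρ
          + (lam ^ 2 / (zp - zm))
            * ((1 - Real.exp (-zm * ρ)) / zm ^ 2 - (1 - Real.exp (-zp * ρ)) / zp ^ 2))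
      = (2 * gam * v / (lam + 2 * gam * v)) * (ρ * Real.exp (-(s * ρ)))
        + ((lam ^ 2 / (zp - zm) / zm ^ 2 - lam ^ 2 / (zp - zm) / zp ^ 2) * Real.exp (-(s * ρ))
          + ((-(lam ^ 2 / (zp - zm) / zm ^ 2)) * Real.exp (-((s + zm) * ρ))
            + (lam ^ 2 / (zp - zm) / zp ^ 2) * Real.exp (-((s + zp) * ρ)))) := by
    intro ρ
    rw [show -((s + zm) * ρ) = -(s * ρ) + -(zm * ρ) by ring,
        show -((s + zp) * ρ) = -(s * ρ) + -(zp * ρ) by ring,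
        Real.exp_add, Real.exp_add,
        show -s * ρ = -(s * ρ) by ring, show -zm * ρ = -(zm * ρ) by ring,
        show -zp * ρ = -(zp * ρ) by ring]
    ring
  simp only [key]
  have I1 : IntegrableOn (fun ρ : ℝ =>
      (2 * gam * v / (lam + 2 * gam * v)) * (ρ * Real.exp (-(s * ρ)))) (Set.Ioi 0) :=
    (lap_int_id hs).const_mul _
  have I2 : IntegrableOn (fun ρ : ℝ =>
      (lam ^ 2 / (zp - zm) / zm ^ 2 - lam ^ 2 / (zp - zm) / zp ^ 2)
        * Real.exp (-(s * ρ))) (Set.Ioi 0) := (lap_int_exp hs).const_mul _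
  have I3 : IntegrableOn (fun ρ : ℝ =>
      (-(lam ^ 2 / (zp - zm) / zm ^ 2)) * Real.exp (-((s + zm) * ρ))) (Set.Ioi 0) :=
    (lap_int_exp hszm).const_mul _
  have I4 : IntegrableOn (fun ρ : ℝ =>
      (lam ^ 2 / (zp - zm) / zp ^ 2) * Real.exp (-((s + zp) * ρ))) (Set.Ioi 0) :=
    (lap_int_exp hszp).const_mul _
  have I34 : IntegrableOn (fun ρ : ℝ =>
      (-(lam ^ 2 / (zp - zm) / zm ^ 2)) * Real.exp (-((s + zm) * ρ))
        + (lam ^ 2 / (zp - zm) / zp ^ 2) * Real.exp (-((s + zp) * ρ))) (Set.Ioi 0) := I3.add I4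
  have I234 : IntegrableOn (fun ρ : ℝ =>
      (lam ^ 2 / (zp - zm) / zm ^ 2 - lam ^ 2 / (zp - zm) / zp ^ 2) * Real.exp (-(s * ρ))
        + ((-(lam ^ 2 / (zp - zm) / zm ^ 2)) * Real.exp (-((s + zm) * ρ))
          + (lam ^ 2 / (zp - zm) / zp ^ 2) * Real.exp (-((s + zp) * ρ)))) (Set.Ioi 0) :=
    I2.add I34
  rw [integral_add I1 I234, integral_add I2 I34, integral_add I3 I4,
      integral_const_mul, integral_const_mul, integral_const_mul, integral_const_mul,
      lap_id hs, lap_exp hs, lap_exp hszm, lap_exp hszp]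
  have hs' : s ≠ 0 := ne_of_gt hs
  have hzm' : zm ≠ 0 := ne_of_gt hzm0
  have hzp' : zp ≠ 0 := ne_of_gt hzp0
  have hszm' : s + zm ≠ 0 := ne_of_gt hszm
  have hszp' : s + zp ≠ 0 := ne_of_gt hszp
  calc (2 * gam * v / (lam + 2 * gam * v)) * (1 / s ^ 2)
        + ((lam ^ 2 / (zp - zm) / zm ^ 2 - lam ^ 2 / (zp - zm) / zp ^ 2) * (1 / s)
          + ((-(lam ^ 2 / (zp - zm) / zm ^ 2)) * (1 / (s + zm))
            + (lam ^ 2 / (zp - zm) / zp ^ 2) * (1 / (s + zp))))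
      = (2 * gam * v / (lam + 2 * gam * v)) * (1 / s ^ 2)
          + lam ^ 2 * (s + (zp + zm)) / (s * (zm * zp) * ((s + zm) * (s + zp))) := by
        field_simp
        ring
    _ = (2 * gam * v / (lam + 2 * gam * v)) * (1 / s ^ 2)
          + lam ^ 2 * (s + (2 * lam + gam * v))
            / (s * (lam * (lam + 2 * gam * v))
              * (lam * (lam + 2 * gam * v) + (2 * lam + gam * v) * s + s ^ 2)) := by
        rw [hsum, hprod, hP]
    _ = (1 / s ^ 2) * (2 * lam * gam * v + (2 * lam + gam * v) * s + s ^ 2)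
          / (lam * (lam + 2 * gam * v) + (2 * lam + gam * v) * s + s ^ 2) := by
        have hD : (0:ℝ) < lam * (lam + 2 * gam * v) + (2 * lam + gam * v) * s + s ^ 2 := by
          positivity
        have hD' := ne_of_gt hD
        field_simp
        ring
end

section
/- Let λ, γ, v > 0 and 0 < p ≤ 1. Then every root z ∈ ℂ of the polynomial P(z) = z³ + (2λ+γv)z² + λ(λ+2γv)z + pλ²γv has strictly negative real part. -/
/-- Hurwitz stability: every complex root of
`z³ + (2λ+γv)z² + λ(λ+2γv)z + pλ²γv` has negative real part. -/
theorem stmt_16 (lam gam v p : ℝ) (hlam : 0 < lam) (hgam : 0 < gam) (hv : 0 < v)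
    (hp : 0 < p) (hp1 : p ≤ 1) :
    ∀ z : ℂ,
      z ^ 3 + (2 * lam + gam * v) * z ^ 2 + (lam : ℂ) * (lam + 2 * gam * v) * z
          + p * (lam : ℂ) ^ 2 * gam * v = 0
        → z.re < 0 := by
  rintro ⟨x, y⟩ hz
  by_contra h
  push_neg at h
  have hx : 0 ≤ x := h
  simp only [Complex.ext_iff, pow_succ, pow_zero, one_mul, Complex.mul_re, Complex.mul_im,
    Complex.add_re, Complex.add_im, Complex.ofReal_re, Complex.ofReal_im, Complex.zero_re,
    Complex.zero_im, Complex.re_ofNat, Complex.im_ofNat] at hz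
  obtain ⟨h1, h2⟩ := hz
  ring_nf at h1 h2
  rcases eq_or_ne y 0 with hy | hy
  · subst hy
    ring_nf at h1
    nlinarith [mul_pos (mul_pos (mul_pos hp (mul_pos hlam hlam)) hgam) hv,
      mul_nonneg (mul_nonneg (mul_nonneg hx hlam.le) hgam.le) hv.le,
      mul_nonneg hx (mul_pos hlam hlam).le,
      mul_nonneg (mul_nonneg (sq_nonneg x) hlam.le) (by norm_num : (0:ℝ) ≤ 2),
      mul_nonneg (sq_nonneg x) hlam.le,
      mul_nonneg (mul_nonneg (sq_nonneg x) hgam.le) hv.le,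
      mul_nonneg hx (mul_nonneg hx hx)]
  · have h2' : y * (3 * x ^ 2 + 2 * (2 * lam + gam * v) * x
        + (lam ^ 2 + 2 * lam * gam * v) - y ^ 2) = 0 := by linear_combination h2
    have hE : 3 * x ^ 2 + 2 * (2 * lam + gam * v) * x
        + (lam ^ 2 + 2 * lam * gam * v) - y ^ 2 = 0 :=
      (mul_eq_zero.mp h2').resolve_left hy
    have key : 8 * x ^ 3 + 8 * (2 * lam + gam * v) * x ^ 2
        + 2 * ((lam ^ 2 + 2 * lam * gam * v) + (2 * lam + gam * v) ^ 2) * x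
        + ((2 * lam + gam * v) * (lam ^ 2 + 2 * lam * gam * v) - p * lam ^ 2 * gam * v) = 0 := by
      linear_combination (3 * x + (2 * lam + gam * v)) * hE - h1
    have hc : p * lam ^ 2 * gam * v ≤ lam ^ 2 * gam * v := by nlinarith [mul_pos (mul_pos (mul_pos hlam hlam) hgam) hv]
    nlinarith [key, hc, hx, mul_pos hgam hv, mul_pos hlam hlam, mul_pos hlam (mul_pos hgam hv),
      mul_nonneg hx (mul_nonneg hx hx), sq_nonneg x, mul_nonneg (mul_nonneg hx hx) (le_of_lt (mul_pos hgam hv)),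
      mul_nonneg hx (le_of_lt (mul_pos hlam hlam)), mul_pos (mul_pos hlam hlam) hlam]
end
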